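/- Let X₁, X₂ ∈ ℝ^{m×n}, K a positive integer, α_k = k/K for k = 0,…,K, X(α) = α X₁ + (1−α) X₂, and G(α) = X(α) X(α)ᵀ. Then for every k = 0,…,K−1, every α ∈ [α_k, α_{k+1}], and every i = 1,…,m, the ordered eigenvalues satisfy |λ_i(G(α)) − λ_i(G(α_k))| ≤ (2/K)(σ_1(X₁) + σ_1(X₂))². -/

import Mathlib

open Matrix

/-- `i`-th largest (0-indexed) eigenvalue of a Hermitian real matrix. -/
noncomputable def eigDesc {m : ℕ} (A : Matrix (Fin m) (Fin m) ℝ) (hA : A.IsHermitian)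
    (i : ℕ) : ℝ :=
  if h : i < m then hA.eigenvalues (Tuple.sort hA.eigenvalues (Fin.rev ⟨i, h⟩)) else 0

theorem hermXXt {m n : ℕ} (X : Matrix (Fin m) (Fin n) ℝ) : (X * Xᵀ).IsHermitian := by
  simpa using Matrix.isHermitian_mul_conjTranspose_self X

theorem hermXtX {m n : ℕ} (X : Matrix (Fin m) (Fin n) ℝ) : (Xᵀ * X).IsHermitian := by
  simpa using Matrix.isHermitian_conjTranspose_mul_self X

/-- `i`-th largest (0-indexed) singular value of a real rectangular matrix. -/
noncomputable def singVal {m n : ℕ} (X : Matrix (Fin m) (Fin n) ℝ) (i : ℕ) : ℝ :=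
  Real.sqrt (eigDesc (Xᵀ * X) (hermXtX X) i)

/-- `i`-th largest (0-indexed) eigenvalue of the Gram matrix `X * Xᵀ`. -/
noncomputable def gramEig {m n : ℕ} (X : Matrix (Fin m) (Fin n) ℝ) (i : ℕ) : ℝ :=
  eigDesc (X * Xᵀ) (hermXXt X) i

/-- Convex combination `α • X₁ + (1 - α) • X₂`. -/
noncomputable def conv {m n : ℕ} (X₁ X₂ : Matrix (Fin m) (Fin n) ℝ) (α : ℝ) :
    Matrix (Fin m) (Fin n) ℝ :=
  α • X₁ + (1 - α) • X₂

namespace WeylAux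

variable {m n : ℕ}

/-- dot product CS -/
lemma dot_sq_le (u v : Fin n → ℝ) : (u ⬝ᵥ v) ^ 2 ≤ (u ⬝ᵥ u) * (v ⬝ᵥ v) := by
  simpa [dotProduct, pow_two] using
    Finset.sum_mul_sq_le_sq_mul_sq Finset.univ u v

lemma dot_self_nonneg (u : Fin n → ℝ) : 0 ≤ u ⬝ᵥ u :=
  Finset.sum_nonneg fun i _ => mul_self_nonneg _

lemma dot_self_pos {u : Fin n → ℝ} (hu : u ≠ 0) : 0 < u ⬝ᵥ u := by
  rcases (dot_self_nonneg u).lt_or_eq with h | h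
  · exact h
  · exfalso
    apply hu
    funext i
    have := Finset.sum_eq_zero_iff_of_nonneg (s := Finset.univ)
      (f := fun i => u i * u i) (fun i _ => mul_self_nonneg _) |>.1 h.symm i (Finset.mem_univ i)
    exact mul_self_eq_zero.mp this

noncomputable def nrm (u : Fin n → ℝ) : ℝ := Real.sqrt (u ⬝ᵥ u)

lemma nrm_nonneg (u : Fin n → ℝ) : 0 ≤ nrm u := Real.sqrt_nonneg _

lemma sq_nrm (u : Fin n → ℝ) : (nrm u) ^ 2 = u ⬝ᵥ u := Real.sq_sqrt (dot_self_nonneg u)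

lemma dot_le_nrm_mul_nrm (u v : Fin n → ℝ) : u ⬝ᵥ v ≤ nrm u * nrm v := by
  have h := dot_sq_le u v
  have h2 : (u ⬝ᵥ v) ^ 2 ≤ (nrm u * nrm v) ^ 2 := by
    rw [mul_pow, sq_nrm, sq_nrm]; exact h
  have hb : (0:ℝ) ≤ nrm u * nrm v := mul_nonneg (nrm_nonneg u) (nrm_nonneg v)
  calc u ⬝ᵥ v ≤ |u ⬝ᵥ v| := le_abs_self _
    _ = Real.sqrt ((u ⬝ᵥ v) ^ 2) := (Real.sqrt_sq_eq_abs _).symm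
    _ ≤ Real.sqrt ((nrm u * nrm v) ^ 2) := Real.sqrt_le_sqrt h2
    _ = nrm u * nrm v := by rw [Real.sqrt_sq hb]

lemma nrm_add_le (u v : Fin n → ℝ) : nrm (u + v) ≤ nrm u + nrm v := by
  have key : (nrm (u + v)) ^ 2 ≤ (nrm u + nrm v) ^ 2 := by
    rw [sq_nrm]
    have expand : (u + v) ⬝ᵥ (u + v) = u ⬝ᵥ u + 2 * (u ⬝ᵥ v) + v ⬝ᵥ v := by
      simp [add_dotProduct, dotProduct_add, dotProduct_comm v u]; ring
    rw [expand]
    have := dot_le_nrm_mul_nrm u v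
    nlinarith [sq_nrm u, sq_nrm v]
  have hb : (0:ℝ) ≤ nrm u + nrm v := add_nonneg (nrm_nonneg u) (nrm_nonneg v)
  calc nrm (u + v) = Real.sqrt ((nrm (u+v)) ^ 2) := (Real.sqrt_sq (nrm_nonneg _)).symm
    _ ≤ Real.sqrt ((nrm u + nrm v) ^ 2) := Real.sqrt_le_sqrt key
    _ = nrm u + nrm v := Real.sqrt_sq hb

lemma nrm_smul (a : ℝ) (u : Fin n → ℝ) : nrm (a • u) = |a| * nrm u := by
  unfold nrm
  rw [smul_dotProduct, dotProduct_smul, smul_eq_mul, smul_eq_mul, ← mul_assoc, ← pow_two,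
    Real.sqrt_mul (sq_nonneg a), Real.sqrt_sq_eq_abs]

lemma abs_nrm_sub_nrm_le (u v : Fin n → ℝ) : |nrm u - nrm v| ≤ nrm (u - v) := by
  rw [abs_sub_le_iff]
  constructor
  · have := nrm_add_le (u - v) v
    simpa using this
  · have := nrm_add_le (v - u) u
    have h2 : nrm (v - u) = nrm (u - v) := by
      have : v - u = (-1 : ℝ) • (u - v) := by ring_nf; module
      rw [this, nrm_smul]; simp
    simp only [sub_add_cancel] at this
    linarith [this, h2]


section Spec

variable {A B : Matrix (Fin m) (Fin m) ℝ}

/-- eigenvector `j` as a plain vector -/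
noncomputable def vb (hA : A.IsHermitian) (j : Fin m) : Fin m → ℝ :=
  ⇑(hA.eigenvectorBasis j)

/-- coordinates of `x` in the eigenbasis -/
noncomputable def coord (hA : A.IsHermitian) (x : Fin m → ℝ) (j : Fin m) : ℝ :=
  vb hA j ⬝ᵥ x

lemma vb_dot (hA : A.IsHermitian) (i j : Fin m) :
    vb hA i ⬝ᵥ vb hA j = if i = j then 1 else 0 := by
  have h := hA.eigenvectorBasis.orthonormal
  rw [orthonormal_iff_ite] at h
  have := h i j
  simpa [vb, dotProduct, PiLp.inner_apply, RCLike.inner_apply, mul_comm] using this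

lemma coord_mulVec (hA : A.IsHermitian) (x : Fin m → ℝ) (j : Fin m) :
    coord hA (A *ᵥ x) j = hA.eigenvalues j * coord hA x j := by
  unfold coord
  rw [dotProduct_mulVec, ← mulVec_transpose]
  have hsym : Aᵀ = A := by
    have := hA
    unfold Matrix.IsHermitian at this
    simpa using this
  rw [hsym]
  have h1 : A *ᵥ vb hA j = hA.eigenvalues j • vb hA j := hA.mulVec_eigenvectorBasis j
  rw [show A *ᵥ vb hA j = hA.eigenvalues j • vb hA j from h1, smul_dotProduct, smul_eq_mul]

lemma sum_dot (f : Fin m → (Fin m → ℝ)) (y : Fin m → ℝ) :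
    (∑ j, f j) ⬝ᵥ y = ∑ j, f j ⬝ᵥ y := by
  simp only [dotProduct, Finset.sum_apply, Finset.sum_mul]
  rw [Finset.sum_comm]

lemma dot_sum (x : Fin m → ℝ) (f : Fin m → (Fin m → ℝ)) :
    x ⬝ᵥ (∑ j, f j) = ∑ j, x ⬝ᵥ f j := by
  simp only [dotProduct, Finset.sum_apply, Finset.mul_sum]
  rw [Finset.sum_comm]

lemma sum_repr (hA : A.IsHermitian) (x : Fin m → ℝ) :
    x = ∑ j, coord hA x j • vb hA j := by
  set L := WithLp.linearEquiv 2 ℝ (Fin m → ℝ)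
  have hx : L.symm x = ∑ j, coord hA x j • (hA.eigenvectorBasis j) := by
    rw [← hA.eigenvectorBasis.sum_repr (L.symm x)]
    refine Finset.sum_congr rfl fun j _ => ?_
    congr 1
    rw [hA.eigenvectorBasis.repr_apply_apply]
    simp [coord, vb, PiLp.inner_apply, RCLike.inner_apply, dotProduct, L, WithLp.linearEquiv,
      PiLp.toLp_apply, mul_comm]
  have := congrArg L hx
  rw [L.apply_symm_apply, map_sum] at this
  simp only [_root_.map_smul] at this
  exact this

lemma dot_eq_sum_coord (hA : A.IsHermitian) (x y : Fin m → ℝ) :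
    x ⬝ᵥ y = ∑ j, coord hA x j * coord hA y j := by
  conv_lhs => rw [sum_repr hA x, sum_repr hA y]
  rw [sum_dot]
  refine Finset.sum_congr rfl fun j _ => ?_
  rw [smul_dotProduct, dot_sum]
  simp only [dotProduct_smul, smul_eq_mul, vb_dot]
  rw [Finset.sum_eq_single j]
  · simp
  · intro b _ hb; simp [Ne.symm hb]
  · intro hj; exact absurd (Finset.mem_univ j) hj

lemma rayleigh_eq (hA : A.IsHermitian) (x : Fin m → ℝ) :
    x ⬝ᵥ (A *ᵥ x) = ∑ j, hA.eigenvalues j * (coord hA x j) ^ 2 := by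
  rw [dot_eq_sum_coord hA x (A *ᵥ x)]
  refine Finset.sum_congr rfl fun j _ => ?_
  rw [coord_mulVec]
  ring

lemma dot_self_eq_sum (hA : A.IsHermitian) (x : Fin m → ℝ) :
    x ⬝ᵥ x = ∑ j, (coord hA x j) ^ 2 := by
  rw [dot_eq_sum_coord hA x x]
  simp [pow_two]

lemma coord_eq_zero_of_mem_span (hA : A.IsHermitian) (S : Set (Fin m)) (x : Fin m → ℝ)
    (hx : x ∈ Submodule.span ℝ (vb hA '' S)) {j : Fin m} (hj : j ∉ S) :
    coord hA x j = 0 := by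
  induction hx using Submodule.span_induction with
  | mem y hy =>
    obtain ⟨s, hs, rfl⟩ := hy
    have hne : j ≠ s := fun h => hj (h ▸ hs)
    simp [coord, vb_dot, hne]
  | zero => simp [coord]
  | add y z _ _ hy hz => simp [coord, dotProduct_add] at *; rw [hy, hz]; simp
  | smul a y _ hy => simp [coord, dotProduct_smul] at *; rw [hy]; simp

end Spec


section EigDesc

variable {A B : Matrix (Fin m) (Fin m) ℝ}

lemma eigDesc_eq_fin (hA : A.IsHermitian) (i : Fin m) :
    eigDesc A hA i = hA.eigenvalues (Tuple.sort hA.eigenvalues i.rev) := by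
  unfold eigDesc
  rw [dif_pos i.isLt]

lemma eigDesc_antitone (hA : A.IsHermitian) {i j : Fin m} (hij : i ≤ j) :
    eigDesc A hA j ≤ eigDesc A hA i := by
  rw [eigDesc_eq_fin, eigDesc_eq_fin]
  exact Tuple.monotone_sort hA.eigenvalues (Fin.rev_le_rev.mpr hij)

lemma eigenvalues_le_eigDesc_zero (hA : A.IsHermitian) (hm : 0 < m) (j : Fin m) :
    hA.eigenvalues j ≤ eigDesc A hA 0 := by
  set i : Fin m := ((Tuple.sort hA.eigenvalues)⁻¹ j).rev with hi
  have h1 : eigDesc A hA i = hA.eigenvalues j := by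
    rw [eigDesc_eq_fin]
    simp [hi, Fin.rev_rev]
  have h0 : (⟨0, hm⟩ : Fin m) ≤ i := by simp [Fin.le_def]
  have := eigDesc_antitone hA h0
  rw [h1] at this
  convert this using 2

/-- linear independence of the eigenvectors -/
lemma vb_linearIndependent (hA : A.IsHermitian) : LinearIndependent ℝ (vb hA) := by
  rw [Fintype.linearIndependent_iff]
  intro g hg k
  have h := congrArg (fun z => vb hA k ⬝ᵥ z) hg
  simp only [dot_sum, dotProduct_smul, vb_dot, dotProduct_zero, smul_eq_mul] at h
  rw [Finset.sum_eq_single k] at h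
  · simpa using h
  · intro b _ hb; simp [Ne.symm hb]
  · intro hk; exact absurd (Finset.mem_univ k) hk

lemma finrank_span_vb (hA : A.IsHermitian) (S : Finset (Fin m)) :
    Module.finrank ℝ (Submodule.span ℝ (vb hA '' ↑S)) = S.card := by
  have hli : LinearIndependent ℝ (fun j : {x // x ∈ S} => vb hA j) :=
    (vb_linearIndependent hA).comp Subtype.val Subtype.val_injective
  have hr : Set.range (fun j : {x // x ∈ S} => vb hA j) = vb hA '' ↑S := by
    ext w
    simp
  have := finrank_span_eq_card hli
  rw [hr] at this
  rw [this, Fintype.card_coe]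

lemma ray_ge (hA : A.IsHermitian) (S : Finset (Fin m)) (t : ℝ)
    (hS : ∀ j ∈ S, t ≤ hA.eigenvalues j) {x : Fin m → ℝ}
    (hx : x ∈ Submodule.span ℝ (vb hA '' ↑S)) :
    t * (x ⬝ᵥ x) ≤ x ⬝ᵥ (A *ᵥ x) := by
  rw [rayleigh_eq hA, dot_self_eq_sum hA, Finset.mul_sum]
  refine Finset.sum_le_sum fun j _ => ?_
  by_cases hj : j ∈ S
  · exact mul_le_mul_of_nonneg_right (hS j hj) (sq_nonneg _)
  · rw [coord_eq_zero_of_mem_span hA _ _ hx hj]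
    simp

lemma ray_le (hA : A.IsHermitian) (S : Finset (Fin m)) (t : ℝ)
    (hS : ∀ j ∈ S, hA.eigenvalues j ≤ t) {x : Fin m → ℝ}
    (hx : x ∈ Submodule.span ℝ (vb hA '' ↑S)) :
    x ⬝ᵥ (A *ᵥ x) ≤ t * (x ⬝ᵥ x) := by
  rw [rayleigh_eq hA, dot_self_eq_sum hA, Finset.mul_sum]
  refine Finset.sum_le_sum fun j _ => ?_
  by_cases hj : j ∈ S
  · exact mul_le_mul_of_nonneg_right (hS j hj) (sq_nonneg _)
  · rw [coord_eq_zero_of_mem_span hA _ _ hx hj]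
    simp

lemma ray_le_top (hA : A.IsHermitian) (hm : 0 < m) (x : Fin m → ℝ) :
    x ⬝ᵥ (A *ᵥ x) ≤ eigDesc A hA 0 * (x ⬝ᵥ x) := by
  rw [rayleigh_eq hA, dot_self_eq_sum hA, Finset.mul_sum]
  exact Finset.sum_le_sum fun j _ =>
    mul_le_mul_of_nonneg_right (eigenvalues_le_eigDesc_zero hA hm j) (sq_nonneg _)

lemma weyl_one (hA : A.IsHermitian) (hB : B.IsHermitian) (c : ℝ)
    (hc : ∀ x : Fin m → ℝ, x ⬝ᵥ x = 1 → x ⬝ᵥ (A *ᵥ x) - x ⬝ᵥ (B *ᵥ x) ≤ c)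
    (i : ℕ) (hi : i < m) : eigDesc A hA i ≤ eigDesc B hB i + c := by
  classical
  set ii : Fin m := ⟨i, hi⟩ with hii
  set SA : Finset (Fin m) := (Finset.Iic ii).image
      (fun j => Tuple.sort hA.eigenvalues j.rev) with hSA
  set SB : Finset (Fin m) := (Finset.Ici ii).image
      (fun j => Tuple.sort hB.eigenvalues j.rev) with hSB
  have hinjA : Function.Injective (fun j : Fin m => Tuple.sort hA.eigenvalues j.rev) :=
    fun a b h => Fin.rev_injective ((Tuple.sort hA.eigenvalues).injective h)
  have hinjB : Function.Injective (fun j : Fin m => Tuple.sort hB.eigenvalues j.rev) :=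
    fun a b h => Fin.rev_injective ((Tuple.sort hB.eigenvalues).injective h)
  have hcardA : SA.card = i + 1 := by
    rw [hSA, Finset.card_image_of_injective _ hinjA, Fin.card_Iic]
  have hcardB : SB.card = m - i := by
    rw [hSB, Finset.card_image_of_injective _ hinjB, Fin.card_Ici]
  set V := Submodule.span ℝ (vb hA '' ↑SA) with hV
  set W := Submodule.span ℝ (vb hB '' ↑SB) with hW
  have hfV : Module.finrank ℝ V = i + 1 := by rw [hV, finrank_span_vb, hcardA]
  have hfW : Module.finrank ℝ W = m - i := by rw [hW, finrank_span_vb, hcardB]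
  have hsup : Module.finrank ℝ ↥(V ⊔ W) ≤ m := by
    have := Submodule.finrank_le (V ⊔ W)
    rwa [Module.finrank_fin_fun] at this
  have hVW : 0 < Module.finrank ℝ ↥(V ⊓ W) := by
    have heq := Submodule.finrank_sup_add_finrank_inf_eq V W
    omega
  obtain ⟨⟨x, hxVW⟩, hxne⟩ := Module.finrank_pos_iff_exists_ne_zero.mp hVW
  have hx0 : x ≠ 0 := by
    intro h; apply hxne; ext; simp [h]
  have hxx : 0 < x ⬝ᵥ x := dot_self_pos hx0
  set u : Fin m → ℝ := (Real.sqrt (x ⬝ᵥ x))⁻¹ • x with hu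
  have hsq : Real.sqrt (x ⬝ᵥ x) ^ 2 = x ⬝ᵥ x := Real.sq_sqrt hxx.le
  have hspos : 0 < Real.sqrt (x ⬝ᵥ x) := Real.sqrt_pos.mpr hxx
  have huu : u ⬝ᵥ u = 1 := by
    rw [hu, smul_dotProduct, dotProduct_smul, smul_eq_mul, smul_eq_mul, ← mul_assoc, ← pow_two,
      ← Real.sqrt_inv, Real.sq_sqrt (by positivity), inv_mul_cancel₀ hxx.ne']
  have huV : u ∈ V := V.smul_mem _ (hxVW.1)
  have huW : u ∈ W := W.smul_mem _ (hxVW.2)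
  have hA_ge : eigDesc A hA i ≤ u ⬝ᵥ (A *ᵥ u) := by
    have := ray_ge hA SA (eigDesc A hA i) ?_ huV
    · rwa [huu, mul_one] at this
    · intro j hj
      rw [hSA, Finset.mem_image] at hj
      obtain ⟨j', hj', rfl⟩ := hj
      rw [Finset.mem_Iic] at hj'
      have := eigDesc_antitone hA hj'
      rw [eigDesc_eq_fin hA j'] at this
      convert this using 2
  have hB_le : u ⬝ᵥ (B *ᵥ u) ≤ eigDesc B hB i := by
    have := ray_le hB SB (eigDesc B hB i) ?_ huW
    · rwa [huu, mul_one] at this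
    · intro j hj
      rw [hSB, Finset.mem_image] at hj
      obtain ⟨j', hj', rfl⟩ := hj
      rw [Finset.mem_Ici] at hj'
      have := eigDesc_antitone hB hj'
      rw [eigDesc_eq_fin hB j'] at this
      convert this using 2
  have := hc u huu
  linarith

lemma weyl_abs (hA : A.IsHermitian) (hB : B.IsHermitian) (c : ℝ)
    (hc : ∀ x : Fin m → ℝ, x ⬝ᵥ x = 1 → |x ⬝ᵥ ((A - B) *ᵥ x)| ≤ c)
    (i : ℕ) (hi : i < m) : |eigDesc A hA i - eigDesc B hB i| ≤ c := by
  have key : ∀ x : Fin m → ℝ, x ⬝ᵥ (A *ᵥ x) - x ⬝ᵥ (B *ᵥ x) = x ⬝ᵥ ((A - B) *ᵥ x) := by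
    intro x
    rw [Matrix.sub_mulVec, dotProduct_sub]
  have h1 := weyl_one hA hB c (fun x hx => by rw [key]; exact (abs_le.mp (hc x hx)).2) i hi
  have h2 := weyl_one hB hA c (fun x hx => by
    have := (abs_le.mp (hc x hx)).1
    have hs : x ⬝ᵥ (B *ᵥ x) - x ⬝ᵥ (A *ᵥ x) = -(x ⬝ᵥ ((A - B) *ᵥ x)) := by
      rw [← key]; ring
    linarith) i hi
  rw [abs_le]
  constructor <;> linarith

end EigDesc

section SingVal

variable {X : Matrix (Fin m) (Fin n) ℝ}

lemma dot_symm_trans (M : Matrix (Fin m) (Fin n) ℝ) (a : Fin n → ℝ) (b : Fin m → ℝ) :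
    a ⬝ᵥ (Mᵀ *ᵥ b) = (M *ᵥ a) ⬝ᵥ b := by
  rw [dotProduct_mulVec, vecMul_transpose, dotProduct_comm]

lemma eigDesc_XtX_nonneg (X : Matrix (Fin m) (Fin n) ℝ) (i : ℕ) :
    0 ≤ eigDesc (Xᵀ * X) (hermXtX X) i := by
  unfold eigDesc
  split
  · rename_i h
    have hps : (Xᵀ * X).PosSemidef := by
      have := Matrix.posSemidef_conjTranspose_mul_self X
      simpa using this
    exact hps.eigenvalues_nonneg _
  · exact le_refl _

lemma singVal_nonneg (X : Matrix (Fin m) (Fin n) ℝ) (i : ℕ) : 0 ≤ singVal X i :=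
  Real.sqrt_nonneg _

lemma sq_singVal_zero (X : Matrix (Fin m) (Fin n) ℝ) :
    (singVal X 0) ^ 2 = eigDesc (Xᵀ * X) (hermXtX X) 0 := by
  unfold singVal
  exact Real.sq_sqrt (eigDesc_XtX_nonneg X 0)

lemma nrm_transpose_mulVec_le (X : Matrix (Fin m) (Fin n) ℝ) {x : Fin m → ℝ}
    (hx : x ⬝ᵥ x = 1) : nrm (Xᵀ *ᵥ x) ≤ singVal X 0 := by
  rcases Nat.eq_zero_or_pos n with hn | hn
  · subst hn
    have : (Xᵀ *ᵥ x) ⬝ᵥ (Xᵀ *ᵥ x) = 0 := by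
      simp [dotProduct]
    unfold nrm
    rw [this, Real.sqrt_zero]
    exact singVal_nonneg X 0
  · set y := Xᵀ *ᵥ x with hy
    set t := y ⬝ᵥ y with ht
    set lam := eigDesc (Xᵀ * X) (hermXtX X) 0 with hlam
    have ht0 : 0 ≤ t := dot_self_nonneg y
    have h1 : t = x ⬝ᵥ (X *ᵥ y) := by
      rw [ht, hy, dotProduct_mulVec, vecMul_transpose, dotProduct_comm]
    have h2 : t ^ 2 ≤ (X *ᵥ y) ⬝ᵥ (X *ᵥ y) := by
      calc t ^ 2 = (x ⬝ᵥ (X *ᵥ y)) ^ 2 := by rw [h1]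
        _ ≤ (x ⬝ᵥ x) * ((X *ᵥ y) ⬝ᵥ (X *ᵥ y)) := dot_sq_le _ _
        _ = (X *ᵥ y) ⬝ᵥ (X *ᵥ y) := by rw [hx, one_mul]
    have h3 : (X *ᵥ y) ⬝ᵥ (X *ᵥ y) = y ⬝ᵥ ((Xᵀ * X) *ᵥ y) := by
      rw [← mulVec_mulVec, dot_symm_trans]
    have h4 : y ⬝ᵥ ((Xᵀ * X) *ᵥ y) ≤ lam * t := by
      rw [ht]
      exact ray_le_top (hermXtX X) hn y
    have h5 : t ^ 2 ≤ lam * t := by rw [h3] at h2; linarith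
    have htlam : t ≤ lam := by
      rcases ht0.lt_or_eq with hpos | hzero
      · nlinarith
      · rw [← hzero, hlam]
        exact eigDesc_XtX_nonneg X 0
    unfold nrm singVal
    rw [← ht, ← hlam]
    exact Real.sqrt_le_sqrt htlam

end SingVal

lemma nrm_neg (u : Fin n → ℝ) : nrm (-u) = nrm u := by
  have := nrm_smul (-1 : ℝ) u
  simpa using this

lemma nrm_sub_le (u v : Fin n → ℝ) : nrm (u - v) ≤ nrm u + nrm v := by
  rw [sub_eq_add_neg]
  exact (nrm_add_le u (-v)).trans (by rw [nrm_neg])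

lemma conv_transpose_mulVec (X₁ X₂ : Matrix (Fin m) (Fin n) ℝ) (a : ℝ) (x : Fin m → ℝ) :
    (conv X₁ X₂ a)ᵀ *ᵥ x = a • (X₁ᵀ *ᵥ x) + (1 - a) • (X₂ᵀ *ᵥ x) := by
  unfold conv
  rw [transpose_add, transpose_smul, transpose_smul, add_mulVec, smul_mulVec,
    smul_mulVec]

lemma nrm_conv_le (X₁ X₂ : Matrix (Fin m) (Fin n) ℝ) {a : ℝ} (ha0 : 0 ≤ a) (ha1 : a ≤ 1)
    {x : Fin m → ℝ} (hx : x ⬝ᵥ x = 1) :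
    nrm ((conv X₁ X₂ a)ᵀ *ᵥ x) ≤ singVal X₁ 0 + singVal X₂ 0 := by
  rw [conv_transpose_mulVec]
  have h1 := nrm_transpose_mulVec_le X₁ hx
  have h2 := nrm_transpose_mulVec_le X₂ hx
  have htr := nrm_add_le (a • (X₁ᵀ *ᵥ x)) ((1 - a) • (X₂ᵀ *ᵥ x))
  rw [nrm_smul, nrm_smul, abs_of_nonneg ha0, abs_of_nonneg (by linarith : (0:ℝ) ≤ 1 - a)] at htr
  have hn1 := nrm_nonneg (X₁ᵀ *ᵥ x)
  have hn2 := nrm_nonneg (X₂ᵀ *ᵥ x)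
  have hs1 := singVal_nonneg X₁ 0
  have hs2 := singVal_nonneg X₂ 0
  nlinarith

end WeylAux

open WeylAux
theorem stmt6 {m n : ℕ} (X₁ X₂ : Matrix (Fin m) (Fin n) ℝ) (K : ℕ) (hK : 0 < K)
    (k : ℕ) (hk : k < K) (α : ℝ)
    (hα : α ∈ Set.Icc ((k : ℝ) / K) (((k : ℝ) + 1) / K)) (i : ℕ) (hi : i < m) :
    |gramEig (conv X₁ X₂ α) i - gramEig (conv X₁ X₂ ((k : ℝ) / K)) i| ≤
      (2 / K) * (singVal X₁ 0 + singVal X₂ 0) ^ 2 := by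
  
  obtain ⟨hα1, hα2⟩ := hα
  set s₁ := singVal X₁ 0 with hs₁def
  set s₂ := singVal X₂ 0 with hs₂def
  have hs1 : 0 ≤ s₁ := singVal_nonneg X₁ 0
  have hs2 : 0 ≤ s₂ := singVal_nonneg X₂ 0
  have hKpos : (0:ℝ) < K := by exact_mod_cast hK
  have hβ0 : 0 ≤ (k:ℝ)/K := by positivity
  have hβ1 : (k:ℝ)/K ≤ 1 := by
    rw [div_le_one hKpos]
    exact_mod_cast hk.le
  have hkK : ((k:ℝ)+1)/K ≤ 1 := by
    rw [div_le_one hKpos]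
    exact_mod_cast (by omega : k + 1 ≤ K)
  have hα0 : 0 ≤ α := le_trans hβ0 hα1
  have hαle1 : α ≤ 1 := le_trans hα2 hkK
  have hδ0 : 0 ≤ α - (k:ℝ)/K := by linarith
  have hδ : α - (k:ℝ)/K ≤ 1/K := by
    have : ((k:ℝ)+1)/K = (k:ℝ)/K + 1/K := by ring
    linarith [hα2, this ▸ hα2]
  set Y := conv X₁ X₂ α with hY
  set Z := conv X₁ X₂ ((k:ℝ)/K) with hZ
  have key := weyl_abs (hermXXt Y) (hermXXt Z) ((2/(K:ℝ)) * (s₁+s₂)^2) ?_ i hi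
  · exact key
  intro x hx
  set a := nrm (Yᵀ *ᵥ x) with ha
  set b := nrm (Zᵀ *ᵥ x) with hb
  have ha0 : 0 ≤ a := nrm_nonneg _
  have hb0 : 0 ≤ b := nrm_nonneg _
  have haS : a ≤ s₁ + s₂ := nrm_conv_le X₁ X₂ hα0 hαle1 hx
  have hbS : b ≤ s₁ + s₂ := nrm_conv_le X₁ X₂ hβ0 hβ1 hx
  have ha2 : x ⬝ᵥ ((Y * Yᵀ) *ᵥ x) = a ^ 2 := by
    rw [ha, sq_nrm, ← mulVec_mulVec, dotProduct_mulVec, ← mulVec_transpose]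
  have hb2 : x ⬝ᵥ ((Z * Zᵀ) *ᵥ x) = b ^ 2 := by
    rw [hb, sq_nrm, ← mulVec_mulVec, dotProduct_mulVec, ← mulVec_transpose]
  have hgoal : x ⬝ᵥ ((Y * Yᵀ - Z * Zᵀ) *ᵥ x) = a ^ 2 - b ^ 2 := by
    rw [Matrix.sub_mulVec, dotProduct_sub, ha2, hb2]
  rw [hgoal]
  have hsub : Yᵀ *ᵥ x - Zᵀ *ᵥ x = (α - (k:ℝ)/K) • ((X₁ - X₂)ᵀ *ᵥ x) := by
    rw [hY, hZ, conv_transpose_mulVec, conv_transpose_mulVec, transpose_sub, sub_mulVec]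
    module
  have habs : |a - b| ≤ (α - (k:ℝ)/K) * (s₁ + s₂) := by
    calc |a - b| ≤ nrm (Yᵀ *ᵥ x - Zᵀ *ᵥ x) := abs_nrm_sub_nrm_le _ _
      _ = (α - (k:ℝ)/K) * nrm ((X₁ - X₂)ᵀ *ᵥ x) := by
          rw [hsub, nrm_smul, abs_of_nonneg hδ0]
      _ ≤ (α - (k:ℝ)/K) * (s₁ + s₂) := by
          apply mul_le_mul_of_nonneg_left _ hδ0
          have hts : (X₁ - X₂)ᵀ *ᵥ x = X₁ᵀ *ᵥ x - X₂ᵀ *ᵥ x := by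
            rw [transpose_sub, sub_mulVec]
          rw [hts]
          exact (nrm_sub_le _ _).trans
            (add_le_add (nrm_transpose_mulVec_le X₁ hx) (nrm_transpose_mulVec_le X₂ hx))
  have hfact : a ^ 2 - b ^ 2 = (a - b) * (a + b) := by ring
  have habs2 : |a ^ 2 - b ^ 2| = |a - b| * (a + b) := by
    rw [hfact, abs_mul, abs_of_nonneg (by linarith : (0:ℝ) ≤ a + b)]
  rw [habs2]
  have h2K : (α - (k:ℝ)/K) * (s₁ + s₂) ≤ (1/K) * (s₁ + s₂) :=
    mul_le_mul_of_nonneg_right hδ (by linarith)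
  have hab2 : a + b ≤ 2 * (s₁ + s₂) := by linarith
  calc |a - b| * (a + b) ≤ ((1/K) * (s₁ + s₂)) * (2 * (s₁ + s₂)) := by
        apply mul_le_mul (le_trans habs h2K) hab2 (by linarith)
        positivity
    _ = (2/(K:ℝ)) * (s₁ + s₂) ^ 2 := by ring
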